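/- Let θ ∈ (0,1) and let Y₁, Y₂, … be independent, identically distributed random variables with the triangular distribution with parameter θ. Then the Jacobian function evaluated at the sample satisfies J((Y₁,…,Yₙ), θ) → √(1/8) almost surely as n → ∞. -/

import Mathlib

open MeasureTheory Set Filter
open scoped ENNReal NNReal

/-- Density of the triangular distribution on (0,1) with parameter θ. -/
noncomputable def triDensity (θ y : ℝ) : ℝ :=
  Set.indicator (Set.Ioc 0 θ) (fun y => 2 * y / θ) y
    + Set.indicator (Set.Ioo θ 1) (fun y => (2 - 2 * y) / (1 - θ)) y

/-- The triangular distribution with parameter θ, as a measure on ℝ. -/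
noncomputable def triMeasure (θ : ℝ) : Measure ℝ :=
  volume.withDensity fun y => ENNReal.ofReal (triDensity θ y)

/-- Jacobian function of the triangular generalized fiducial distribution for a
sample `y₁,…,yₙ`. -/
noncomputable def triJacobian (n : ℕ) (y : ℕ → ℝ) (θ : ℝ) : ℝ :=
  Real.sqrt ((1 / (n : ℝ)) * ∑ i ∈ Finset.range n,
      (y i / (2 * θ)) ^ 2 * Set.indicator (Set.Ioc 0 θ) 1 (y i)
    + (1 / (n : ℝ)) * ∑ i ∈ Finset.range n,
      ((1 - y i) / (2 * (1 - θ))) ^ 2 * Set.indicator (Set.Ioo θ 1) 1 (y i))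

/-- The summand inside the Jacobian. -/
noncomputable def triG (θ y : ℝ) : ℝ :=
  (y / (2 * θ)) ^ 2 * Set.indicator (Set.Ioc 0 θ) 1 y
    + ((1 - y) / (2 * (1 - θ))) ^ 2 * Set.indicator (Set.Ioo θ 1) 1 y

lemma triG_measurable (θ : ℝ) : Measurable (triG θ) := by
  unfold triG
  exact (((measurable_id.div_const _).pow_const 2).mul
      (measurable_one.indicator measurableSet_Ioc)).add
    ((((measurable_const.sub measurable_id).div_const _).pow_const 2).mul
      (measurable_one.indicator measurableSet_Ioo))

lemma triDensity_measurable (θ : ℝ) : Measurable (triDensity θ) := by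
  unfold triDensity
  exact ((measurable_id.const_mul 2 |>.div_const θ).indicator measurableSet_Ioc).add
    (((measurable_const.sub (measurable_id.const_mul 2)).div_const _).indicator
      measurableSet_Ioo)

lemma triG_nonneg (θ y : ℝ) : 0 ≤ triG θ y := by
  unfold triG
  have h1 : (0 : ℝ) ≤ Set.indicator (Set.Ioc 0 θ) 1 y :=
    Set.indicator_nonneg (fun _ _ => zero_le_one) y
  have h2 : (0 : ℝ) ≤ Set.indicator (Set.Ioo θ 1) 1 y :=
    Set.indicator_nonneg (fun _ _ => zero_le_one) y
  positivity

lemma triG_le {θ : ℝ} (hθ : θ ∈ Set.Ioo (0 : ℝ) 1) (y : ℝ) : triG θ y ≤ 1 / 2 := by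
  obtain ⟨hθ0, hθ1⟩ := hθ
  unfold triG
  have hA : (y / (2 * θ)) ^ 2 * Set.indicator (Set.Ioc 0 θ) 1 y ≤ 1 / 4 := by
    by_cases h : y ∈ Set.Ioc 0 θ
    · rw [Set.indicator_of_mem h]
      simp only [Pi.one_apply, mul_one]
      have h1 : y / (2 * θ) ≤ 1 / 2 := by
        rw [div_le_iff₀ (by linarith)]
        nlinarith [h.2]
      have h0 : 0 ≤ y / (2 * θ) := div_nonneg h.1.le (by linarith)
      nlinarith
    · rw [Set.indicator_of_notMem h]; norm_num
  have hB : ((1 - y) / (2 * (1 - θ))) ^ 2 * Set.indicator (Set.Ioo θ 1) 1 y ≤ 1 / 4 := by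
    by_cases h : y ∈ Set.Ioo θ 1
    · rw [Set.indicator_of_mem h]
      simp only [Pi.one_apply, mul_one]
      have h1 : (1 - y) / (2 * (1 - θ)) ≤ 1 / 2 := by
        rw [div_le_iff₀ (by linarith)]
        nlinarith [h.1]
      have h0 : 0 ≤ (1 - y) / (2 * (1 - θ)) := by
        apply div_nonneg <;> nlinarith [h.2]
      nlinarith
    · rw [Set.indicator_of_notMem h]; norm_num
  linarith

lemma triDensity_mul_triG {θ : ℝ} (hθ : θ ∈ Set.Ioo (0 : ℝ) 1) :
    (fun y => triDensity θ y * triG θ y)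
      = Set.indicator (Set.Ioc 0 θ) (fun y => y ^ 3 / (2 * θ ^ 3))
        + Set.indicator (Set.Ioo θ 1) (fun y => (1 - y) ^ 3 / (2 * (1 - θ) ^ 3)) := by
  obtain ⟨hθ0, hθ1⟩ := hθ
  funext y
  simp only [triDensity, triG, Pi.add_apply]
  by_cases h1 : y ∈ Set.Ioc 0 θ
  · have h2 : y ∉ Set.Ioo θ 1 := fun h => absurd h1.2 (not_le.mpr h.1)
    rw [Set.indicator_of_mem h1, Set.indicator_of_mem h1, Set.indicator_of_notMem h2,
      Set.indicator_of_notMem h2]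
    simp only [Pi.one_apply, mul_one, mul_zero, add_zero]
    simp only [Set.indicator_of_mem h1, Set.indicator_of_notMem h2, add_zero]
    field_simp
  · rw [Set.indicator_of_notMem h1, Set.indicator_of_notMem h1]
    by_cases h2 : y ∈ Set.Ioo θ 1
    · rw [Set.indicator_of_mem h2, Set.indicator_of_mem h2]
      simp only [Pi.one_apply, mul_one, mul_zero, zero_add]
      simp only [Set.indicator_of_mem h2, Set.indicator_of_notMem h1, zero_add]
      have : (1 : ℝ) - θ ≠ 0 := by linarith
      field_simp
    · rw [Set.indicator_of_notMem h2, Set.indicator_of_notMem h2,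
        Set.indicator_of_notMem h1, Set.indicator_of_notMem h2]
      simp

lemma triG_integral {θ : ℝ} (hθ : θ ∈ Set.Ioo (0 : ℝ) 1) :
    ∫ y, triG θ y ∂(triMeasure θ) = 1 / 8 := by
  obtain ⟨hθ0, hθ1⟩ := hθ
  have hθ1' : (0 : ℝ) < 1 - θ := by linarith
  have hdm : Measurable fun y => (triDensity θ y).toNNReal :=
    (triDensity_measurable θ).real_toNNReal
  have hnn : ∀ y, 0 ≤ triDensity θ y := by
    intro y
    unfold triDensity
    have h1 : (0 : ℝ) ≤ Set.indicator (Set.Ioc 0 θ) (fun y => 2 * y / θ) y := by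
      apply Set.indicator_nonneg
      intro x hx
      have := hx.1
      positivity
    have h2 : (0 : ℝ) ≤ Set.indicator (Set.Ioo θ 1) (fun y => (2 - 2 * y) / (1 - θ)) y := by
      apply Set.indicator_nonneg
      intro x hx
      apply div_nonneg _ hθ1'.le
      nlinarith [hx.2]
    linarith
  have hmeq : triMeasure θ = volume.withDensity fun y => ((triDensity θ y).toNNReal : ℝ≥0∞) := by
    rfl
  rw [hmeq, integral_withDensity_eq_integral_smul hdm]
  have hsmul : (fun y => (triDensity θ y).toNNReal • triG θ y)
      = fun y => triDensity θ y * triG θ y := by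
    funext y
    rw [NNReal.smul_def, Real.coe_toNNReal _ (hnn y), smul_eq_mul]
  rw [hsmul, triDensity_mul_triG ⟨hθ0, hθ1⟩]
  have hi1 : Integrable (Set.indicator (Set.Ioc 0 θ) (fun y : ℝ => y ^ 3 / (2 * θ ^ 3))) := by
    rw [integrable_indicator_iff measurableSet_Ioc]
    exact (continuous_pow 3 |>.div_const _).integrableOn_Ioc
  have hi2 : Integrable (Set.indicator (Set.Ioo θ 1)
      (fun y : ℝ => (1 - y) ^ 3 / (2 * (1 - θ) ^ 3))) := by
    rw [integrable_indicator_iff measurableSet_Ioo]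
    exact ((((continuous_const.sub continuous_id).pow 3).div_const _).integrableOn_Ioc).mono_set
      Set.Ioo_subset_Ioc_self
  rw [Pi.add_def, integral_add hi1 hi2, integral_indicator measurableSet_Ioc,
    integral_indicator measurableSet_Ioo]
  have e1 : ∫ y in Set.Ioc 0 θ, y ^ 3 / (2 * θ ^ 3) = θ / 8 := by
    rw [← intervalIntegral.integral_of_le hθ0.le]
    rw [intervalIntegral.integral_div, integral_pow]
    field_simp
    ring
  have e2 : ∫ y in Set.Ioo θ 1, (1 - y) ^ 3 / (2 * (1 - θ) ^ 3) = (1 - θ) / 8 := by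
    rw [← integral_Ioc_eq_integral_Ioo, ← intervalIntegral.integral_of_le hθ1.le]
    rw [intervalIntegral.integral_div]
    have : ∫ y in θ..1, (1 - y) ^ 3 = ∫ x in (1 - 1)..(1 - θ), x ^ 3 :=
      intervalIntegral.integral_comp_sub_left (fun x => x ^ 3) 1
    rw [this, integral_pow]
    have h : (1 : ℝ) - θ ≠ 0 := by linarith
    field_simp
    ring
  rw [e1, e2]
  ring

/-- For i.i.d. triangular observations, the Jacobian function evaluated at the sample
converges almost surely to `√(1/8)`. -/
theorem triangular_jacobian_as_limit
    {Ω : Type*} [MeasurableSpace Ω] (μ : Measure Ω) [IsProbabilityMeasure μ]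
    (θ : ℝ) (hθ : θ ∈ Set.Ioo (0 : ℝ) 1)
    (Y : ℕ → Ω → ℝ) (hmeas : ∀ i, Measurable (Y i))
    (hindep : ProbabilityTheory.iIndepFun Y μ)
    (hlaw : ∀ i, Measure.map (Y i) μ = triMeasure θ) :
    ∀ᵐ ω ∂μ, Tendsto (fun n => triJacobian n (fun i => Y i ω) θ)
      atTop (nhds (Real.sqrt (1 / 8))) := by
  set X : ℕ → Ω → ℝ := fun i ω => triG θ (Y i ω) with hX
  have hXmeas : ∀ i, Measurable (X i) := fun i => (triG_measurable θ).comp (hmeas i)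
  have hint : Integrable (X 0) μ := by
    refine ⟨(hXmeas 0).aestronglyMeasurable, ?_⟩
    apply MeasureTheory.HasFiniteIntegral.of_bounded (C := 1 / 2)
    refine ae_of_all _ fun ω => ?_
    rw [Real.norm_eq_abs, abs_of_nonneg (triG_nonneg θ _)]
    exact triG_le hθ _
  have hindep' : Pairwise (Function.onFun (ProbabilityTheory.IndepFun · · μ) X) := fun i j hij =>
    (hindep.indepFun hij).comp (triG_measurable θ) (triG_measurable θ)
  have hident : ∀ i, ProbabilityTheory.IdentDistrib (X i) (X 0) μ μ := fun i =>
    (⟨(hmeas i).aemeasurable, (hmeas 0).aemeasurable, by rw [hlaw i, hlaw 0]⟩ :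
      ProbabilityTheory.IdentDistrib (Y i) (Y 0) μ μ).comp (triG_measurable θ)
  have hE : ∫ ω, X 0 ω ∂μ = 1 / 8 := by
    calc ∫ ω, X 0 ω ∂μ = ∫ y, triG θ y ∂(Measure.map (Y 0) μ) :=
          (integral_map (hmeas 0).aemeasurable (triG_measurable θ).aestronglyMeasurable).symm
      _ = 1 / 8 := by rw [hlaw 0]; exact triG_integral hθ
  have hslln := ProbabilityTheory.strong_law_ae_real X hint hindep' hident
  rw [hE] at hslln
  filter_upwards [hslln] with ω hω
  have heq : ∀ n : ℕ, triJacobian n (fun i => Y i ω) θ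
      = Real.sqrt ((∑ i ∈ Finset.range n, X i ω) / n) := by
    intro n
    unfold triJacobian
    congr 1
    simp only [hX, triG, Finset.sum_add_distrib]
    ring
  simpa only [heq, Function.comp_def] using (Real.continuous_sqrt.tendsto (1 / 8)).comp hω
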